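/- Let G be a finite simple graph and let k ≥ 4 be an even integer. A real number λ is an adjacency H-eigenvalue of the generalized power hypergraph G^{k,k/2} if and only if there exists a nonempty subset U ⊆ V(G) such that the induced subgraph G[U] is connected and λ is an eigenvalue of the adjacency matrix A(G[U]) of G[U]. -/

import Mathlib

open Finset

/-- The edge set of the generalized power hypergraph `G^{k, k/2}` (with `s = k/2`):
each edge `{u,v}` of `G` is blown up into the `2s`-set `({u} × Fin s) ∪ ({v} × Fin s)`. -/
def powerEdges {V : Type*} [Fintype V] [DecidableEq V] (G : SimpleGraph V)
    [DecidableRel G.Adj] (s : ℕ) : Finset (Finset (V × Fin s)) :=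
  (Finset.univ.filter fun p : V × V => G.Adj p.1 p.2).image
    (fun p => ({p.1} ×ˢ (Finset.univ : Finset (Fin s)))
        ∪ ({p.2} ×ˢ (Finset.univ : Finset (Fin s))))

/-- `lam` is an adjacency H-eigenvalue of the generalized power hypergraph `G^{k,s}`
(`k = 2s`) with H-eigenvector `x`. -/
def IsAdjHEigPow {V : Type*} [Fintype V] [DecidableEq V] (G : SimpleGraph V)
    [DecidableRel G.Adj] (k s : ℕ) (lam : ℝ) (x : V × Fin s → ℝ) : Prop :=
  x ≠ 0 ∧ ∀ p : V × Fin s,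
    lam * x p ^ (k - 1)
      = ∑ e ∈ (powerEdges G s).filter (fun e => p ∈ e), ∏ w ∈ e.erase p, x w

/-- `lam` is a signless Laplacian H-eigenvalue of the generalized power hypergraph
`G^{k,s}` (`k = 2s`) with H-eigenvector `x`. -/
def IsQHEigPow {V : Type*} [Fintype V] [DecidableEq V] (G : SimpleGraph V)
    [DecidableRel G.Adj] (k s : ℕ) (lam : ℝ) (x : V × Fin s → ℝ) : Prop :=
  x ≠ 0 ∧ ∀ p : V × Fin s,
    lam * x p ^ (k - 1)
      = (((powerEdges G s).filter (fun e => p ∈ e)).card : ℝ) * x p ^ (k - 1)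
        + ∑ e ∈ (powerEdges G s).filter (fun e => p ∈ e), ∏ w ∈ e.erase p, x w

section Aux

lemma reachable_induce_of_walk {V : Type*} (G : SimpleGraph V) {T : Set V} :
    ∀ {a b : V} (w : G.Walk a b) (hw : ∀ z ∈ w.support, z ∈ T),
      (G.induce T).Reachable ⟨a, hw a w.start_mem_support⟩ ⟨b, hw b w.end_mem_support⟩ := by
  intro a b w
  induction w with
  | nil => intro hw; rfl
  | @cons a c b h w ih =>
    intro hw
    have hc : ∀ z ∈ w.support, z ∈ T := fun z hz => hw z (by simp [hz])
    have hadj : (G.induce T).Adj ⟨a, hw a (SimpleGraph.Walk.start_mem_support _)⟩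
        ⟨c, hc c w.start_mem_support⟩ := by
      simp [h]
    exact (hadj.reachable).trans (ih hc)


set_option linter.unusedSectionVars false
set_option linter.unusedVariables false

variable {V : Type*} [Fintype V] [DecidableEq V] (G : SimpleGraph V) [DecidableRel G.Adj]

def edgeOf (s : ℕ) (u v : V) : Finset (V × Fin s) :=
  ({u} ×ˢ (Finset.univ : Finset (Fin s))) ∪ ({v} ×ˢ (Finset.univ : Finset (Fin s)))

lemma mem_edgeOf {s : ℕ} {u v : V} {p : V × Fin s} :
    p ∈ edgeOf s u v ↔ p.1 = u ∨ p.1 = v := by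
  obtain ⟨a, b⟩ := p
  simp [edgeOf, eq_comm]

lemma edgeOf_comm (s : ℕ) (u v : V) : edgeOf s u v = edgeOf s v u := by
  simp [edgeOf, Finset.union_comm]

lemma edgeOf_inj {s : ℕ} (hs : 0 < s) {v u u' : V} (hu : u ≠ v) (hu' : u' ≠ v)
    (h : edgeOf s v u = edgeOf s v u') : u = u' := by
  have : (⟨u, ⟨0, hs⟩⟩ : V × Fin s) ∈ edgeOf s v u := mem_edgeOf.2 (Or.inr rfl)
  rw [h] at this
  rcases mem_edgeOf.1 this with h1 | h1
  · exact absurd h1 hu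
  · exact h1

lemma filter_powerEdges {s : ℕ} (v : V) (j : Fin s) :
    (powerEdges G s).filter (fun e => (v, j) ∈ e)
      = (G.neighborFinset v).image (fun u => edgeOf s v u) := by
  ext e
  simp only [powerEdges, Finset.mem_filter, Finset.mem_image, Finset.mem_filter,
    Finset.mem_univ, true_and, SimpleGraph.mem_neighborFinset]
  constructor
  · rintro ⟨⟨⟨a, b⟩, hab, rfl⟩, hm⟩
    rcases mem_edgeOf.1 hm with h1 | h1
    · subst h1; exact ⟨b, hab, rfl⟩
    · subst h1; exact ⟨a, hab.symm, (edgeOf_comm s v a)⟩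
  · rintro ⟨u, hu, rfl⟩
    exact ⟨⟨⟨v, u⟩, hu, rfl⟩, mem_edgeOf.2 (Or.inl rfl)⟩

lemma prod_edge {s : ℕ} {u v : V} (huv : u ≠ v) (j : Fin s) (x : V × Fin s → ℝ) :
    ∏ w ∈ (edgeOf s v u).erase (v, j), x w
      = (∏ j' ∈ (Finset.univ : Finset (Fin s)).erase j, x (v, j')) * ∏ j', x (u, j') := by
  have hdisj : Disjoint (({v} ×ˢ (Finset.univ : Finset (Fin s))).erase (v, j))
      ({u} ×ˢ (Finset.univ : Finset (Fin s))) := by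
    rw [Finset.disjoint_left]
    rintro ⟨a, b⟩ ha hb
    have h1 : v = a := by
      have := Finset.mem_of_mem_erase ha
      simpa using this
    have h2 : u = a := by simpa using hb
    exact huv (h2.trans h1.symm)
  have hnot : ((v, j) : V × Fin s) ∉ ({u} ×ˢ (Finset.univ : Finset (Fin s))) := by
    simp [huv, Ne.symm huv]
  have he : (edgeOf s v u).erase (v, j)
      = (({v} ×ˢ (Finset.univ : Finset (Fin s))).erase (v, j))
        ∪ ({u} ×ˢ (Finset.univ : Finset (Fin s))) := by
    rw [edgeOf, Finset.erase_union_distrib, Finset.erase_eq_of_notMem hnot]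
  have hA : (({v} ×ˢ (Finset.univ : Finset (Fin s))).erase (v, j))
      = {v} ×ˢ ((Finset.univ : Finset (Fin s)).erase j) := by
    ext ⟨a, b⟩
    constructor
    · intro h
      have h1 := Finset.mem_of_mem_erase h
      have h2 := Finset.ne_of_mem_erase h
      simp only [Finset.mem_product, Finset.mem_singleton, Finset.mem_univ, and_true] at h1 ⊢
      refine ⟨h1, Finset.mem_erase.2 ⟨?_, Finset.mem_univ _⟩⟩
      intro hb; exact h2 (by rw [h1, hb])
    · intro h
      simp only [Finset.mem_product, Finset.mem_singleton, Finset.mem_erase, Finset.mem_univ,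
        and_true] at h
      refine Finset.mem_erase.2 ⟨?_, by simp [h.1]⟩
      intro hq
      exact h.2 (congrArg Prod.snd hq)
  rw [he, Finset.prod_union hdisj, hA, Finset.prod_product, Finset.prod_singleton,
    Finset.prod_product, Finset.prod_singleton]

lemma sum_edges (s : ℕ) (v : V) (j : Fin s) (x : V × Fin s → ℝ) :
    ∑ e ∈ (powerEdges G s).filter (fun e => (v, j) ∈ e), ∏ w ∈ e.erase (v, j), x w
      = (∏ j' ∈ (Finset.univ : Finset (Fin s)).erase j, x (v, j'))
        * ∑ u ∈ G.neighborFinset v, ∏ j', x (u, j') := by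
  rcases Nat.eq_zero_or_pos s with hs | hs
  · exact absurd j.2 (by omega)
  rw [filter_powerEdges, Finset.sum_image, Finset.mul_sum]
  · refine Finset.sum_congr rfl fun u hu => ?_
    have huv : u ≠ v := (G.ne_of_adj ((SimpleGraph.mem_neighborFinset _ _ _).1 hu).symm)
    exact prod_edge huv j x
  · intro a ha b hb hab
    exact edgeOf_inj hs (G.ne_of_adj ((SimpleGraph.mem_neighborFinset _ _ _).1 ha).symm)
      (G.ne_of_adj ((SimpleGraph.mem_neighborFinset _ _ _).1 hb).symm) hab

lemma rpow_pow' {a : ℝ} {s : ℕ} (hs : s ≠ 0) :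
    ((|a| ^ ((s:ℝ)⁻¹)) ^ s) = |a| := by
  rw [← Real.rpow_natCast (|a| ^ ((s:ℝ)⁻¹)) s, ← Real.rpow_mul (abs_nonneg a),
    inv_mul_cancel₀ (by exact_mod_cast hs), Real.rpow_one]

lemma real_sign_mul_abs (y : ℝ) : Real.sign y * |y| = y := by
  rcases lt_trichotomy y 0 with h|h|h
  · rw [Real.sign_of_neg h, abs_of_neg h]; ring
  · simp [h, Real.sign_zero]
  · rw [Real.sign_of_pos h, abs_of_pos h]; ring

lemma prod_sign_rpow (y : ℝ) (s : ℕ) (hs : s ≠ 0) (j0 : Fin s)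
    (x : Fin s → ℝ) (hx : ∀ i, x i = (if i = j0 then Real.sign y else 1) * |y| ^ ((s:ℝ)⁻¹)) :
    ∏ i, x i = y := by
  calc ∏ i, x i = (∏ i, (if i = j0 then Real.sign y else 1)) * ∏ _i : Fin s, |y| ^ ((s:ℝ)⁻¹) := by
        rw [← Finset.prod_mul_distrib]; exact Finset.prod_congr rfl fun i _ => hx i
    _ = Real.sign y * (|y| ^ ((s:ℝ)⁻¹)) ^ s := by
        rw [Finset.prod_ite_eq' Finset.univ j0 (fun _ => Real.sign y)]
        simp [Finset.prod_const]
    _ = y := by rw [rpow_pow' hs, real_sign_mul_abs]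

lemma pow_2s_eq (y : ℝ) (s : ℕ) (hs : s ≠ 0) (j0 i : Fin s)
    (x : Fin s → ℝ) (hx : ∀ i, x i = (if i = j0 then Real.sign y else 1) * |y| ^ ((s:ℝ)⁻¹)) :
    x i ^ (2 * s) = y ^ 2 := by
  by_cases hy : y = 0
  · subst hy
    have hxi : x i = 0 := by
      rw [hx i, abs_zero, Real.zero_rpow (inv_ne_zero (by exact_mod_cast hs)), mul_zero]
    rw [hxi, zero_pow (by omega : 2 * s ≠ 0), zero_pow (by omega : (2:ℕ) ≠ 0)]
  · have h1 : (x i) ^ (2 * s) = ((x i) ^ s) ^ 2 := by rw [← pow_mul, Nat.mul_comm]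
    rw [h1, hx i]
    rw [mul_pow, rpow_pow' hs]
    have hsq : (Real.sign y) ^ 2 = 1 := by
      rcases Real.sign_apply_eq_of_ne_zero y hy with h|h <;> rw [h] <;> ring
    rcases eq_or_ne i j0 with h | h
    · simp only [h, if_pos rfl]
      calc ((Real.sign y) ^ s * |y|) ^ 2 = ((Real.sign y) ^ 2) ^ s * |y| ^ 2 := by ring
        _ = y ^ 2 := by rw [hsq, one_pow, one_mul, sq_abs]
    · simp only [if_neg h, one_pow, one_mul]
      rw [sq_abs]
end Aux

section Directions

variable {V : Type*} [Fintype V] [DecidableEq V] (G : SimpleGraph V) [DecidableRel G.Adj]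

lemma aux_backward (k s : ℕ) (hk : 4 ≤ k) (hks : k = 2 * s) (lam : ℝ)
    (U : Finset V) (y : {v : V // v ∈ U} → ℝ) (hy : y ≠ 0)
    (hm : (Matrix.of fun u w : {v : V // v ∈ U} =>
        if G.Adj u.1 w.1 then (1 : ℝ) else 0).mulVec y = lam • y) :
    ∃ x : V × Fin s → ℝ, IsAdjHEigPow G k s lam x := by
  have hs2 : 2 ≤ s := by omega
  have hs0 : s ≠ 0 := by omega
  set j0 : Fin s := ⟨0, by omega⟩ with hj0
  set Y : V → ℝ := fun v => if h : v ∈ U then y ⟨v, h⟩ else 0 with hYdef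
  set x : V × Fin s → ℝ :=
    fun p => (if p.2 = j0 then Real.sign (Y p.1) else 1) * |Y p.1| ^ ((s:ℝ)⁻¹) with hxdef
  have hP : ∀ v, ∏ j, x (v, j) = Y v := fun v =>
    prod_sign_rpow (Y v) s hs0 j0 (fun j => x (v, j)) (fun i => rfl)
  have h2s : ∀ v (j : Fin s), x (v, j) ^ (2 * s) = Y v ^ 2 := fun v j =>
    pow_2s_eq (Y v) s hs0 j0 j (fun j => x (v, j)) (fun i => rfl)
  have hzero : ∀ v, Y v = 0 → ∀ j, x (v, j) = 0 := by
    intro v hv j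
    show (if j = j0 then Real.sign (Y v) else 1) * |Y v| ^ ((s:ℝ)⁻¹) = 0
    rw [hv, abs_zero, Real.zero_rpow (inv_ne_zero (by exact_mod_cast hs0)), mul_zero]
  have hxne : ∀ v (j : Fin s), Y v ≠ 0 → x (v, j) ≠ 0 := by
    intro v j hv
    have : ∏ i, x (v, i) ≠ 0 := by rw [hP v]; exact hv
    exact Finset.prod_ne_zero_iff.mp this j (Finset.mem_univ j)
  have hsum : ∀ v (hv : v ∈ U), ∑ u ∈ G.neighborFinset v, Y u = lam * Y v := by
    intro v hv
    have h1 := congrFun hm ⟨v, hv⟩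
    simp only [Matrix.mulVec, dotProduct, Matrix.of_apply, Pi.smul_apply,
      smul_eq_mul] at h1
    have h2 : ∀ w : {v : V // v ∈ U}, y w = Y w.1 := by
      intro w; simp only [hYdef, w.2, dif_pos]
    have h3 : ∑ w : {v : V // v ∈ U}, (if G.Adj v w.1 then (1:ℝ) else 0) * y w
        = ∑ u ∈ U, (if G.Adj v u then Y u else 0) := by
      rw [← Finset.sum_coe_sort U (fun u => if G.Adj v u then Y u else 0)]
      refine Finset.sum_congr rfl fun w _ => ?_
      rw [h2 w, ite_mul, one_mul, zero_mul]
    have h4 : ∑ u ∈ U, (if G.Adj v u then Y u else 0)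
        = ∑ u ∈ Finset.univ, (if G.Adj v u then Y u else 0) := by
      refine Finset.sum_subset (Finset.subset_univ U) fun u _ hu => ?_
      have : Y u = 0 := by simp only [hYdef, dif_neg hu]
      rw [this, ite_self]
    have h5 : ∑ u ∈ Finset.univ, (if G.Adj v u then Y u else 0)
        = ∑ u ∈ G.neighborFinset v, Y u := by
      rw [SimpleGraph.neighborFinset_eq_filter, Finset.sum_filter]
    rw [h3, h4, h5] at h1
    rw [h1, h2 ⟨v, hv⟩]
  refine ⟨x, ?_, ?_⟩
  · obtain ⟨w, hw⟩ := Function.ne_iff.mp hy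
    intro h0
    have hYw : Y w.1 ≠ 0 := by
      simp only [hYdef, w.2, dif_pos]
      simpa using hw
    exact hxne w.1 j0 hYw (congrFun h0 (w.1, j0))
  · rintro ⟨v, j⟩
    rw [sum_edges]
    have hs' : ∑ u ∈ G.neighborFinset v, ∏ j', x (u, j') = ∑ u ∈ G.neighborFinset v, Y u :=
      Finset.sum_congr rfl fun u _ => hP u
    rw [hs']
    by_cases hYv : Y v = 0
    · have hQ : ∏ j' ∈ (Finset.univ : Finset (Fin s)).erase j, x (v, j') = 0 := by
        obtain ⟨j', hj'u, hj'⟩ := Finset.exists_mem_ne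
          (by rw [Finset.card_univ, Fintype.card_fin]; omega) j
        exact Finset.prod_eq_zero (Finset.mem_erase.2 ⟨hj', hj'u⟩) (hzero v hYv j')
      rw [hQ, zero_mul, hzero v hYv j, zero_pow (by omega : k - 1 ≠ 0), mul_zero]
    · have hvU : v ∈ U := by
        by_contra hvU
        exact hYv (by simp only [hYdef, dif_neg hvU])
      rw [hsum v hvU]
      have hxp : x (v, j) ≠ 0 := hxne v j hYv
      apply mul_right_cancel₀ hxp
      have e1 : x (v, j) ^ (k - 1) * x (v, j) = x (v, j) ^ k := by
        rw [← pow_succ]; congr 1; omega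
      have e2 : x (v, j) * ∏ j' ∈ (Finset.univ : Finset (Fin s)).erase j, x (v, j')
          = Y v := by rw [Finset.mul_prod_erase Finset.univ (fun j' => x (v, j'))
            (Finset.mem_univ j)]; exact hP v
      calc lam * x (v, j) ^ (k - 1) * x (v, j)
          = lam * x (v, j) ^ k := by rw [mul_assoc, e1]
        _ = lam * (Y v ^ 2) := by rw [hks, h2s]
        _ = (∏ j' ∈ (Finset.univ : Finset (Fin s)).erase j, x (v, j')) * (lam * Y v)
              * x (v, j) := by
            rw [show (∏ j' ∈ (Finset.univ : Finset (Fin s)).erase j, x (v, j')) * (lam * Y v)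
              * x (v, j) = (x (v, j) * ∏ j' ∈ (Finset.univ : Finset (Fin s)).erase j, x (v, j'))
              * (lam * Y v) by ring, e2]; ring

end Directions

section Fwd

variable {V : Type*} [Fintype V] [DecidableEq V] (G : SimpleGraph V) [DecidableRel G.Adj]

lemma aux_forward (k s : ℕ) (hk : 4 ≤ k) (hks : k = 2 * s) (lam : ℝ)
    (x : V × Fin s → ℝ) (hx : IsAdjHEigPow G k s lam x) :
    ∃ U : Finset V, U.Nonempty ∧ (G.induce (U : Set V)).Connected ∧
      ∃ y : {v : V // v ∈ U} → ℝ, y ≠ 0 ∧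
        (Matrix.of fun u w : {v : V // v ∈ U} =>
            if G.Adj u.1 w.1 then (1 : ℝ) else 0).mulVec y = lam • y := by
  classical
  obtain ⟨hx0, heig⟩ := hx
  have hs2 : 2 ≤ s := by omega
  set P : V → ℝ := fun v => ∏ j, x (v, j) with hPdef
  have step1 : ∀ v (j : Fin s), lam * x (v, j) ^ k
      = P v * ∑ u ∈ G.neighborFinset v, P u := by
    intro v j
    have h := heig (v, j)
    rw [sum_edges] at h
    have e1 : x (v, j) ^ k = x (v, j) ^ (k - 1) * x (v, j) := by
      rw [← pow_succ]; congr 1; omega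
    have e2 : x (v, j) * ∏ j' ∈ (Finset.univ : Finset (Fin s)).erase j, x (v, j') = P v := by
      rw [Finset.mul_prod_erase Finset.univ (fun j' => x (v, j')) (Finset.mem_univ j)]
    calc lam * x (v, j) ^ k = lam * x (v, j) ^ (k - 1) * x (v, j) := by rw [e1]; ring
      _ = ((∏ j' ∈ (Finset.univ : Finset (Fin s)).erase j, x (v, j'))
            * ∑ u ∈ G.neighborFinset v, ∏ j', x (u, j')) * x (v, j) := by rw [h]
      _ = (x (v, j) * ∏ j' ∈ (Finset.univ : Finset (Fin s)).erase j, x (v, j'))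
            * ∑ u ∈ G.neighborFinset v, P u := by ring
      _ = P v * ∑ u ∈ G.neighborFinset v, P u := by rw [e2]
  obtain ⟨p0, hp0⟩ := Function.ne_iff.mp hx0
  by_cases hlam : lam = 0
  · refine ⟨{p0.1}, ⟨p0.1, Finset.mem_singleton_self _⟩, ?_, fun _ => 1, ?_, ?_⟩
    · rw [SimpleGraph.connected_iff]
      refine ⟨?_, ?_⟩
      · intro a b
        have : a = b := by
          apply Subtype.ext
          have ha : a.1 ∈ ({p0.1} : Finset V) := a.2
          have hb : b.1 ∈ ({p0.1} : Finset V) := b.2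
          rw [Finset.mem_singleton] at ha hb
          rw [ha, hb]
        rw [this]
      · exact ⟨⟨p0.1, Finset.mem_coe.2 (Finset.mem_singleton_self _)⟩⟩
    · intro h
      exact one_ne_zero (congrFun h ⟨p0.1, Finset.mem_singleton_self _⟩)
    · funext w
      have hw : w.1 = p0.1 := Finset.mem_singleton.1 w.2
      simp only [Matrix.mulVec, dotProduct, Matrix.of_apply, Pi.smul_apply,
        smul_eq_mul, hlam, zero_mul, mul_one]
      apply Finset.sum_eq_zero
      intro u _
      have hu : u.1 = p0.1 := Finset.mem_singleton.1 u.2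
      rw [if_neg (by rw [hw, hu]; exact G.irrefl)]
  · have hPex : ∃ v, P v ≠ 0 := by
      by_contra h
      push_neg at h
      have h1 := step1 p0.1 p0.2
      rw [h p0.1, zero_mul] at h1
      have : x (p0.1, p0.2) ^ k = 0 := by
        rcases mul_eq_zero.1 h1 with h2 | h2
        · exact absurd h2 hlam
        · exact h2
      have : x (p0.1, p0.2) = 0 := by
        exact pow_eq_zero_iff (by omega : k ≠ 0) |>.1 this
      exact hp0 (by rwa [Prod.mk.eta] at this)
    have claimB : ∀ v, P v ≠ 0 → lam * P v = ∑ u ∈ G.neighborFinset v, P u := by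
      intro v hPv
      set T := ∑ u ∈ G.neighborFinset v, P u with hT
      have hxv : ∀ j : Fin s, x (v, j) ≠ 0 := fun j =>
        Finset.prod_ne_zero_iff.mp hPv j (Finset.mem_univ j)
      have hc : ∀ j : Fin s, x (v, j) ^ k = P v * T / lam := by
        intro j
        rw [eq_div_iff hlam, mul_comm (x (v, j) ^ k) lam, step1 v j]
      set j1 : Fin s := ⟨0, by omega⟩ with hj1
      have hkey : (P v ^ 2) ^ s = (x (v, j1) ^ k) ^ s := by
        calc (P v ^ 2) ^ s = P v ^ (2 * s) := by rw [← pow_mul]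
          _ = ∏ j : Fin s, x (v, j) ^ (2 * s) := by rw [hPdef, ← Finset.prod_pow]
          _ = ∏ j : Fin s, (x (v, j1) ^ k) := by
              refine Finset.prod_congr rfl fun j _ => ?_
              rw [← hks, hc j, hc j1]
          _ = (x (v, j1) ^ k) ^ s := by rw [Finset.prod_const, Finset.card_univ,
              Fintype.card_fin]
      have hP2 : (0:ℝ) ≤ P v ^ 2 := sq_nonneg _
      have hxk : (0:ℝ) ≤ x (v, j1) ^ k := by
        rw [hks, pow_mul]
        exact pow_nonneg (sq_nonneg _) s
      have hPT : P v ^ 2 = x (v, j1) ^ k :=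
        (pow_left_strictMonoOn₀ (by omega : s ≠ 0)).injOn hP2 hxk hkey
      have hfin : lam * (P v ^ 2) = P v * T := by
        rw [hPT, mul_comm, ← step1 v j1]; ring
      have := mul_left_cancel₀ hPv (show P v * (lam * P v) = P v * T by rw [← hfin]; ring)
      exact this
    obtain ⟨v0, hv0⟩ := hPex
    set U : Finset V := Finset.univ.filter
      (fun u => ∃ w : G.Walk v0 u, ∀ z ∈ w.support, P z ≠ 0) with hUdef
    have hv0U : v0 ∈ U := by
      rw [hUdef, Finset.mem_filter]
      exact ⟨Finset.mem_univ _, SimpleGraph.Walk.nil, by simpa using hv0⟩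
    have hUP : ∀ u ∈ U, P u ≠ 0 := by
      intro u hu
      rw [hUdef, Finset.mem_filter] at hu
      obtain ⟨_, w, hw⟩ := hu
      exact hw u w.end_mem_support
    have hclose : ∀ u ∈ U, ∀ b, G.Adj u b → P b ≠ 0 → b ∈ U := by
      intro u hu b hadj hb
      rw [hUdef, Finset.mem_filter] at hu ⊢
      obtain ⟨_, w, hw⟩ := hu
      refine ⟨Finset.mem_univ _, w.concat hadj, ?_⟩
      intro z hz
      rw [SimpleGraph.Walk.support_concat, List.mem_append] at hz
      rcases hz with hz | hz
      · exact hw z hz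
      · rw [List.mem_singleton] at hz
        rw [hz]; exact hb
    have hsupportU : ∀ (a : V) (w : G.Walk v0 a), (∀ z ∈ w.support, P z ≠ 0)
        → ∀ z ∈ w.support, z ∈ (U : Set V) := by
      intro a w hw z hz
      refine Finset.mem_coe.2 ?_
      rw [hUdef, Finset.mem_filter]
      refine ⟨Finset.mem_univ _, w.takeUntil z hz, fun z' hz' => ?_⟩
      exact hw z' (SimpleGraph.Walk.support_takeUntil_subset w hz hz')
    have hreach : ∀ a (ha : a ∈ U), (G.induce (U : Set V)).Reachable
        ⟨v0, Finset.mem_coe.2 hv0U⟩ ⟨a, Finset.mem_coe.2 ha⟩ := by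
      intro a ha
      rw [hUdef, Finset.mem_filter] at ha
      obtain ⟨_, w, hw⟩ := ha
      have hsupp := hsupportU a w hw
      exact reachable_induce_of_walk G w hsupp
    refine ⟨U, ⟨v0, hv0U⟩, ?_, fun w => P w.1, ?_, ?_⟩
    · rw [SimpleGraph.connected_iff]
      refine ⟨?_, ?_⟩
      · intro a b
        have ha := hreach a.1 (Finset.mem_coe.1 a.2)
        have hb := hreach b.1 (Finset.mem_coe.1 b.2)
        exact ha.symm.trans hb
      · exact ⟨⟨v0, Finset.mem_coe.2 hv0U⟩⟩
    · intro h
      exact hv0 (congrFun h ⟨v0, hv0U⟩)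
    · funext u
      simp only [Matrix.mulVec, dotProduct, Matrix.of_apply, Pi.smul_apply,
        smul_eq_mul]
      have h3 : ∑ w : {v : V // v ∈ U}, (if G.Adj u.1 w.1 then (1:ℝ) else 0) * P w.1
          = ∑ b ∈ U, (if G.Adj u.1 b then P b else 0) := by
        rw [← Finset.sum_coe_sort U (fun b => if G.Adj u.1 b then P b else 0)]
        exact Finset.sum_congr rfl fun w _ => by rw [ite_mul, one_mul, zero_mul]
      have h4 : ∑ b ∈ U, (if G.Adj u.1 b then P b else 0)
          = ∑ b ∈ Finset.univ, (if G.Adj u.1 b then P b else 0) := by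
        refine Finset.sum_subset (Finset.subset_univ U) fun b _ hb => ?_
        by_cases hadj : G.Adj u.1 b
        · rw [if_pos hadj]
          by_contra hPb
          exact hb (hclose u.1 u.2 b hadj hPb)
        · rw [if_neg hadj]
      have h5 : ∑ b ∈ Finset.univ, (if G.Adj u.1 b then P b else 0)
          = ∑ b ∈ G.neighborFinset u.1, P b := by
        rw [SimpleGraph.neighborFinset_eq_filter, Finset.sum_filter]
      rw [h3, h4, h5, ← claimB u.1 (hUP u.1 u.2)]

end Fwd

/-- `λ` is an adjacency H-eigenvalue of `G^{k,k/2}` iff there is a nonempty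
`U ⊆ V(G)` with `G[U]` connected such that `λ` is an eigenvalue of the adjacency matrix of
the induced subgraph `G[U]`. -/
theorem stmt13 {V : Type*} [Fintype V] [DecidableEq V] (G : SimpleGraph V)
    [DecidableRel G.Adj] (k s : ℕ) (hk : 4 ≤ k) (hks : k = 2 * s) (lam : ℝ) :
    (∃ x : V × Fin s → ℝ, IsAdjHEigPow G k s lam x) ↔
    ∃ U : Finset V, U.Nonempty ∧ (G.induce (U : Set V)).Connected ∧
      ∃ y : {v : V // v ∈ U} → ℝ, y ≠ 0 ∧
        (Matrix.of fun u w : {v : V // v ∈ U} =>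
            if G.Adj u.1 w.1 then (1 : ℝ) else 0).mulVec y = lam • y := by
  constructor
  · rintro ⟨x, hx⟩
    exact aux_forward G k s hk hks lam x hx
  · rintro ⟨U, _, _, y, hy, hm⟩
    exact aux_backward G k s hk hks lam U y hy hm
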